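/- Let u, v : List α be conjugate words. Then for all x, y, x', y' : List α there exists a constant C : ℕ such that for every k : ℕ, levenshtein (x ++ u^k ++ y) (x' ++ v^k ++ y') ≤ C. -/

import Mathlib

/-- Costs for the Levenshtein edit distance (as in the removed `Mathlib.Data.List.EditDistance.Defs`). -/
structure Levenshtein.Cost (α β δ : Type*) where
  delete : α → δ
  insert : β → δ
  substitute : α → β → δ

/-- The default cost structure: each insertion, deletion and substitution costs 1. -/
def Levenshtein.defaultCost {α : Type*} [DecidableEq α] : Levenshtein.Cost α α ℕ where
  delete _ := 1
  insert _ := 1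
  substitute a b := if a = b then 0 else 1

/-- The Levenshtein edit distance, given by its defining recursion
(the equations `levenshtein_nil_nil`, `levenshtein_nil_cons`, `levenshtein_cons_nil`,
`levenshtein_cons_cons` of the removed Mathlib file). -/
def levenshtein {α β δ : Type*} [AddZeroClass δ] [Min δ] (C : Levenshtein.Cost α β δ) :
    List α → List β → δ
  | [], [] => 0
  | [], y :: ys => C.insert y + levenshtein C [] ys
  | x :: xs, [] => C.delete x + levenshtein C xs []
  | x :: xs, y :: ys =>
    min (C.delete x + levenshtein C xs (y :: ys))
      (min (C.insert y + levenshtein C (x :: xs) ys) (C.substitute x y + levenshtein C xs ys))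

/-- `wpow u k` is the k-fold concatenation `u ++ u ++ ⋯ ++ u` (k copies). -/
def wpow {α : Type*} (u : List α) (k : ℕ) : List α := (List.replicate k u).flatten

section levlemmas

variable {α β δ : Type*} [AddZeroClass δ] [Min δ] (C : Levenshtein.Cost α β δ)

@[simp]
theorem levenshtein_nil_nil : levenshtein C [] [] = 0 := by
  rw [levenshtein]

@[simp]
theorem levenshtein_nil_cons (y : β) (ys : List β) :
    levenshtein C [] (y :: ys) = C.insert y + levenshtein C [] ys := by
  rw [levenshtein]

@[simp]
theorem levenshtein_cons_nil (x : α) (xs : List α) :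
    levenshtein C (x :: xs) [] = C.delete x + levenshtein C xs [] := by
  rw [levenshtein]

theorem levenshtein_cons_cons (x : α) (xs : List α) (y : β) (ys : List β) :
    levenshtein C (x :: xs) (y :: ys) =
      min (C.delete x + levenshtein C xs (y :: ys))
        (min (C.insert y + levenshtein C (x :: xs) ys) (C.substitute x y + levenshtein C xs ys)) := by
  rw [levenshtein]

end levlemmas

section aux

variable {α : Type*} (C : Levenshtein.Cost α α ℕ)

lemma lev_le_insert (s : List α) (y : α) (t : List α) :
    levenshtein C s (y :: t) ≤ C.insert y + levenshtein C s t := by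
  cases s with
  | nil => simp
  | cons x xs =>
      rw [levenshtein_cons_cons]
      exact le_trans (min_le_right _ _) (min_le_left _ _)

lemma lev_le_delete (x : α) (s t : List α) :
    levenshtein C (x :: s) t ≤ C.delete x + levenshtein C s t := by
  cases t with
  | nil => simp
  | cons y ys =>
      rw [levenshtein_cons_cons]
      exact min_le_left _ _

lemma lev_le_substitute (x : α) (s : List α) (y : α) (t : List α) :
    levenshtein C (x :: s) (y :: t) ≤ C.substitute x y + levenshtein C s t := by
  rw [levenshtein_cons_cons]
  exact le_trans (min_le_right _ _) (min_le_right _ _)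

lemma lev_append_le (a : List α) :
    ∀ c b d : List α, levenshtein C (a ++ b) (c ++ d) ≤
      levenshtein C a c + levenshtein C b d := by
  induction a with
  | nil =>
      intro c
      induction c with
      | nil => simp
      | cons y c' ih =>
          intro b d
          simp only [List.nil_append, List.cons_append] at *
          calc levenshtein C b (y :: (c' ++ d))
              ≤ C.insert y + levenshtein C b (c' ++ d) := lev_le_insert C _ _ _
            _ ≤ C.insert y + (levenshtein C [] c' + levenshtein C b d) := by
                exact Nat.add_le_add_left (ih b d) _
            _ = levenshtein C [] (y :: c') + levenshtein C b d := by
                simp [Nat.add_assoc]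
  | cons x a' iha =>
      intro c
      induction c with
      | nil =>
          intro b d
          simp only [List.cons_append, List.nil_append]
          calc levenshtein C (x :: (a' ++ b)) d
              ≤ C.delete x + levenshtein C (a' ++ b) d := lev_le_delete C _ _ _
            _ ≤ C.delete x + (levenshtein C a' [] + levenshtein C b d) :=
                Nat.add_le_add_left (by simpa using iha [] b d) _
            _ = levenshtein C (x :: a') [] + levenshtein C b d := by
                simp [Nat.add_assoc]
      | cons y c' ihc =>
          intro b d
          simp only [List.cons_append]
          rw [levenshtein_cons_cons (x := x) (xs := a') (y := y) (ys := c')]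
          rw [← Nat.add_min_add_right, ← Nat.add_min_add_right]
          refine le_min ?_ (le_min ?_ ?_)
          · calc levenshtein C (x :: (a' ++ b)) ((y :: c') ++ d)
                ≤ C.delete x + levenshtein C (a' ++ b) ((y :: c') ++ d) := by
                  simpa using lev_le_delete C x (a' ++ b) ((y :: c') ++ d)
              _ ≤ C.delete x + (levenshtein C a' (y :: c') + levenshtein C b d) :=
                  Nat.add_le_add_left (iha (y :: c') b d) _
              _ = C.delete x + levenshtein C a' (y :: c') + levenshtein C b d := by
                  omega
          · calc levenshtein C ((x :: a') ++ b) (y :: (c' ++ d))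
                ≤ C.insert y + levenshtein C ((x :: a') ++ b) (c' ++ d) :=
                  lev_le_insert C _ _ _
              _ ≤ C.insert y + (levenshtein C (x :: a') c' + levenshtein C b d) :=
                  Nat.add_le_add_left (ihc b d) _
              _ = C.insert y + levenshtein C (x :: a') c' + levenshtein C b d := by
                  omega
          · calc levenshtein C (x :: (a' ++ b)) (y :: (c' ++ d))
                ≤ C.substitute x y + levenshtein C (a' ++ b) (c' ++ d) :=
                  lev_le_substitute C _ _ _ _
              _ ≤ C.substitute x y + (levenshtein C a' c' + levenshtein C b d) :=
                  Nat.add_le_add_left (iha c' b d) _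
              _ = C.substitute x y + levenshtein C a' c' + levenshtein C b d := by
                  omega

lemma lev_self [DecidableEq α] (s : List α) :
    levenshtein Levenshtein.defaultCost s s = 0 := by
  induction s with
  | nil => simp
  | cons x xs ih =>
      refine Nat.le_zero.mp ?_
      calc levenshtein Levenshtein.defaultCost (x :: xs) (x :: xs)
          ≤ Levenshtein.defaultCost.substitute x x +
            levenshtein Levenshtein.defaultCost xs xs := lev_le_substitute _ _ _ _ _
        _ = 0 := by
            rw [show Levenshtein.defaultCost.substitute x x = 0 by simp [Levenshtein.defaultCost], Nat.zero_add, ih]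

lemma wpow_succ (u : List α) (k : ℕ) : wpow u (k + 1) = u ++ wpow u k := by
  simp [wpow, List.replicate_succ]

lemma wpow_comm (u : List α) (k : ℕ) : u ++ wpow u k = wpow u k ++ u := by
  induction k with
  | zero => simp [wpow]
  | succ k ih => simp only [wpow_succ, List.append_assoc]; rw [ih]

lemma wpow_succ' (u : List α) (k : ℕ) : wpow u (k + 1) = wpow u k ++ u := by
  rw [wpow_succ, wpow_comm]

lemma wpow_rot (p q : List α) (k : ℕ) :
    wpow (p ++ q) k ++ p = p ++ wpow (q ++ p) k := by
  induction k with
  | zero => simp [wpow]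
  | succ k ih =>
      rw [wpow_succ, wpow_succ']
      calc p ++ q ++ wpow (p ++ q) k ++ p = p ++ q ++ (wpow (p ++ q) k ++ p) := by
            simp [List.append_assoc]
        _ = p ++ (wpow (q ++ p) k ++ (q ++ p)) := by
            rw [ih, ← wpow_comm]; simp [List.append_assoc]

end aux

theorem stmt_3 {α : Type*} [DecidableEq α] (u v : List α) (huv : List.IsRotated u v) :
    ∀ x y x' y' : List α, ∃ C : ℕ, ∀ k : ℕ,
      levenshtein Levenshtein.defaultCost (x ++ wpow u k ++ y) (x' ++ wpow v k ++ y') ≤ C := by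
  obtain ⟨n, hn⟩ := huv
  set p : List α := u.take (n % u.length) with hp
  set q : List α := u.drop (n % u.length) with hq
  have hu : u = p ++ q := (List.take_append_drop _ _).symm
  have hv : v = q ++ p := by
    rw [← hn, List.rotate_eq_drop_append_take_mod]
  intro x y x' y'
  refine ⟨max (levenshtein Levenshtein.defaultCost (x ++ y) (x' ++ y'))
    (levenshtein Levenshtein.defaultCost (x ++ p) (x' ++ v) +
      levenshtein Levenshtein.defaultCost (q ++ y) y'), ?_⟩
  intro k
  cases k with
  | zero =>
      simp only [wpow, List.replicate_zero, List.flatten_nil, List.append_nil]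
      exact le_max_left _ _
  | succ k =>
      refine le_trans ?_ (le_max_right _ _)
      have key : wpow u (k + 1) = p ++ wpow v k ++ q := by
        rw [wpow_succ', hu, hv, ← wpow_rot p q k]
        simp [List.append_assoc]
      have hvk : wpow v (k + 1) = v ++ wpow v k := wpow_succ v k
      rw [key, hvk]
      have e1 : x ++ (p ++ wpow v k ++ q) ++ y =
          (x ++ p) ++ (wpow v k ++ (q ++ y)) := by simp [List.append_assoc]
      have e2 : x' ++ (v ++ wpow v k) ++ y' =
          (x' ++ v) ++ (wpow v k ++ y') := by simp [List.append_assoc]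
      rw [e1, e2]
      calc levenshtein Levenshtein.defaultCost ((x ++ p) ++ (wpow v k ++ (q ++ y)))
            ((x' ++ v) ++ (wpow v k ++ y'))
          ≤ levenshtein Levenshtein.defaultCost (x ++ p) (x' ++ v) +
            levenshtein Levenshtein.defaultCost (wpow v k ++ (q ++ y)) (wpow v k ++ y') :=
            lev_append_le _ _ _ _ _
        _ ≤ levenshtein Levenshtein.defaultCost (x ++ p) (x' ++ v) +
            (levenshtein Levenshtein.defaultCost (wpow v k) (wpow v k) +
              levenshtein Levenshtein.defaultCost (q ++ y) y') :=
            Nat.add_le_add_left (lev_append_le _ _ _ _ _) _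
        _ = levenshtein Levenshtein.defaultCost (x ++ p) (x' ++ v) +
            levenshtein Levenshtein.defaultCost (q ++ y) y' := by
            rw [lev_self, Nat.zero_add]
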